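/- Quantitative Bihari-type estimate: Under the hypotheses of the Bihari-type lemma (f continuous with f(t) ≤ a + b t^α ∫_0^t (t−s)^{−α} s^{−α} ϱ(f(s)) ds, ϱ concave increasing vanishing only at 0), for any 1 < p < 2 with α < 1/p and conjugate q, one has f(t) ≤ [F^{−1}(F(2^{q−1} a^q) + 2^{q−1} b^q C_{α,p}^{q/p} t^{q((1/p)−α)+1})]^{1/q} for all t ∈ [0,T] for which the argument lies in the domain of F^{−1}, where F(x) = ∫_1^x du/ϱ(u^{1/q})^q and C_{α,p} = B(1−pα, 1−pα). -/

import Mathlib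

open MeasureTheory Set intervalIntegral Real

noncomputable def bihariW (ϱ : ℝ → ℝ) (q u : ℝ) : ℝ := (ϱ (u ^ (1/q))) ^ q

noncomputable def bihariF (ϱ : ℝ → ℝ) (q y : ℝ) : ℝ := ∫ u in (1:ℝ)..y, 1 / bihariW ϱ q u

section aux
variable {ϱ : ℝ → ℝ} {q : ℝ}

lemma bihariW_pos (hpos : ∀ u : ℝ, 0 < u → 0 < ϱ u) {u : ℝ} (hu : 0 < u) :
    0 < bihariW ϱ q u :=
  Real.rpow_pos_of_pos (hpos _ (Real.rpow_pos_of_pos hu _)) _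

lemma bihariW_mono (hq : 0 < q) (hmono : MonotoneOn ϱ (Set.Ici 0))
    (hpos : ∀ u : ℝ, 0 < u → 0 < ϱ u) {u v : ℝ} (hu : 0 < u) (huv : u ≤ v) :
    bihariW ϱ q u ≤ bihariW ϱ q v := by
  have h1 : (0:ℝ) < u ^ (1/q) := Real.rpow_pos_of_pos hu _
  have h2 : u ^ (1/q) ≤ v ^ (1/q) := Real.rpow_le_rpow hu.le huv (by positivity)
  have h3 : ϱ (u ^ (1/q)) ≤ ϱ (v ^ (1/q)) :=
    hmono (le_of_lt h1) (le_trans h1.le h2) h2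
  exact Real.rpow_le_rpow (hpos _ h1).le h3 hq.le

lemma bihariW_contOn (hq : 0 < q) (hconc : ConcaveOn ℝ (Set.Ici 0) ϱ) :
    ContinuousOn (bihariW ϱ q) (Set.Ioi 0) := by
  have hϱ : ContinuousOn ϱ (Set.Ioi 0) := by
    have := hconc.continuousOn_interior
    rwa [interior_Ici] at this
  have h1 : ContinuousOn (fun u : ℝ => u ^ (1/q)) (Set.Ioi 0) := fun u hu =>
    (Real.continuousAt_rpow_const u _ (Or.inl (ne_of_gt hu))).continuousWithinAt
  have hmaps : MapsTo (fun u : ℝ => u ^ (1/q)) (Set.Ioi 0) (Set.Ioi 0) := fun u hu =>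
    Real.rpow_pos_of_pos hu _
  exact (hϱ.comp h1 hmaps).rpow_const fun u _ => Or.inr hq.le

lemma bihariWinv_contOn (hq : 0 < q) (hconc : ConcaveOn ℝ (Set.Ici 0) ϱ)
    (hpos : ∀ u : ℝ, 0 < u → 0 < ϱ u) :
    ContinuousOn (fun u => 1 / bihariW ϱ q u) (Set.Ioi 0) :=
  continuousOn_const.div (bihariW_contOn hq hconc) fun u hu => (bihariW_pos hpos hu).ne'

lemma bihari_uIcc_subset_Ioi {y z : ℝ} (hy : 0 < y) (hz : 0 < z) :
    Set.uIcc y z ⊆ Set.Ioi 0 := fun u hu => lt_of_lt_of_le (lt_min hy hz) hu.1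

lemma bihariWinv_intInt (hq : 0 < q) (hconc : ConcaveOn ℝ (Set.Ici 0) ϱ)
    (hpos : ∀ u : ℝ, 0 < u → 0 < ϱ u) {y z : ℝ} (hy : 0 < y) (hz : 0 < z) :
    IntervalIntegrable (fun u => 1 / bihariW ϱ q u) volume y z :=
  ((bihariWinv_contOn hq hconc hpos).mono (bihari_uIcc_subset_Ioi hy hz)).intervalIntegrable

lemma bihariF_hasDeriv (hq : 0 < q) (hconc : ConcaveOn ℝ (Set.Ici 0) ϱ)
    (hpos : ∀ u : ℝ, 0 < u → 0 < ϱ u) {y : ℝ} (hy : 0 < y) :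
    HasDerivAt (bihariF ϱ q) (1 / bihariW ϱ q y) y := by
  unfold bihariF
  refine intervalIntegral.integral_hasDerivAt_right
    (bihariWinv_intInt hq hconc hpos one_pos hy)
    (ContinuousOn.stronglyMeasurableAtFilter isOpen_Ioi
      (bihariWinv_contOn hq hconc hpos) y hy) ?_
  exact (bihariWinv_contOn hq hconc hpos).continuousAt (Ioi_mem_nhds hy)

lemma bihariF_add (hq : 0 < q) (hconc : ConcaveOn ℝ (Set.Ici 0) ϱ)
    (hpos : ∀ u : ℝ, 0 < u → 0 < ϱ u) {y z : ℝ} (hy : 0 < y) (hz : 0 < z) :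
    bihariF ϱ q z = bihariF ϱ q y + ∫ u in y..z, 1 / bihariW ϱ q u := by
  unfold bihariF
  rw [intervalIntegral.integral_add_adjacent_intervals
    (bihariWinv_intInt hq hconc hpos one_pos hy) (bihariWinv_intInt hq hconc hpos hy hz)]

lemma bihariF_le (hq : 0 < q) (hconc : ConcaveOn ℝ (Set.Ici 0) ϱ)
    (hpos : ∀ u : ℝ, 0 < u → 0 < ϱ u) {y z : ℝ} (hy : 0 < y) (hyz : y ≤ z) :
    bihariF ϱ q y ≤ bihariF ϱ q z := by
  rw [bihariF_add hq hconc hpos hy (lt_of_lt_of_le hy hyz)]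
  have : 0 ≤ ∫ u in y..z, 1 / bihariW ϱ q u := by
    refine intervalIntegral.integral_nonneg hyz fun u hu => ?_
    have hu0 : 0 < u := lt_of_lt_of_le hy hu.1
    have := bihariW_pos (q := q) hpos hu0
    positivity
  linarith

lemma bihari_two_rpow {x y c : ℝ} (hx : 0 ≤ x) (hy : 0 ≤ y) (hc : 1 ≤ c) :
    (x + y) ^ c ≤ 2 ^ (c-1) * (x ^ c + y ^ c) := by
  have h := (convexOn_rpow hc).2 (Set.mem_Ici.mpr hx) (Set.mem_Ici.mpr hy)
    (by norm_num : (0:ℝ) ≤ 1/2) (by norm_num : (0:ℝ) ≤ 1/2) (by norm_num)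
  simp only [smul_eq_mul] at h
  have hL : ((1/2) * x + (1/2) * y) = (x + y) * (2:ℝ)⁻¹ := by ring
  rw [hL, Real.mul_rpow (by positivity) (by positivity)] at h
  have h2 : ((2:ℝ)⁻¹) ^ c = ((2:ℝ) ^ c)⁻¹ := Real.inv_rpow (by norm_num) c
  have h2pos : (0:ℝ) < (2:ℝ) ^ c := Real.rpow_pos_of_pos (by norm_num) _
  have h3 : (2:ℝ) ^ (c-1) = (2:ℝ) ^ c / 2 := by
    rw [Real.rpow_sub (by norm_num : (0:ℝ) < 2), Real.rpow_one]
  rw [h2] at h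
  rw [h3]
  calc (x+y)^c = (2:ℝ)^c * ((x+y)^c * ((2:ℝ)^c)⁻¹) := by field_simp
    _ ≤ (2:ℝ)^c * ((1/2) * x^c + (1/2)*y^c) := by
        apply mul_le_mul_of_nonneg_left h h2pos.le
    _ = (2:ℝ)^c/2 * (x^c + y^c) := by ring

lemma bihari_ker_int {r t : ℝ} (hr0 : 0 < r) (hr1 : r < 1) (ht : 0 < t) :
    IntervalIntegrable (fun s => (t - s) ^ (-r) * s ^ (-r)) volume 0 t := by
  have hhalf : (0:ℝ) < t/2 := by linarith
  have h1 : IntervalIntegrable (fun s => (t - s) ^ (-r) * s ^ (-r)) volume 0 (t/2) := by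
    apply IntegrableOn.intervalIntegrable
    rw [uIcc_of_le (by linarith)]
    apply IntegrableOn.continuousOn_mul _ _ isCompact_Icc
    · refine (continuous_const.sub continuous_id).continuousOn.rpow_const fun s hs => Or.inl ?_
      have : s ≤ t/2 := hs.2
      have : 0 < t - s := by linarith
      exact this.ne'
    · have : IntervalIntegrable (fun s : ℝ => s ^ (-r)) volume 0 (t/2) :=
        intervalIntegrable_rpow' (by linarith)
      rw [intervalIntegrable_iff_integrableOn_Icc_of_le (by linarith)] at this
      exact this
  have h2 : IntervalIntegrable (fun s => (t - s) ^ (-r) * s ^ (-r)) volume (t/2) t := by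
    apply IntegrableOn.intervalIntegrable
    rw [uIcc_of_le (by linarith)]
    apply IntegrableOn.mul_continuousOn _ _ isCompact_Icc
    · have hbase : IntervalIntegrable (fun s : ℝ => s ^ (-r)) volume 0 (t/2) :=
        intervalIntegrable_rpow' (by linarith)
      have h' := (hbase.comp_sub_left t).symm
      have heq : t - 0 = t := by ring
      have heq2 : t - t/2 = t/2 := by ring
      rw [heq, heq2] at h'
      rwa [intervalIntegrable_iff_integrableOn_Icc_of_le (by linarith)] at h'
    · refine continuousOn_id.rpow_const fun s hs => Or.inl ?_
      have h1' : t/2 ≤ s := hs.1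
      have : (0:ℝ) < s := by linarith
      exact this.ne'
  exact h1.trans h2

end aux


theorem bihari_step1 (α a b T p q : ℝ) (hα : 1/2 < α) (hα1 : α < 1)
    (hp1 : 1 < p) (hp2 : p < 2) (hαp : α < 1/p) (hpq : 1/p + 1/q = 1)
    (ha : 0 ≤ a) (hb : 0 ≤ b) (hT : 0 < T)
    (ϱ : ℝ → ℝ) (hconc : ConcaveOn ℝ (Set.Ici 0) ϱ)
    (hmono : MonotoneOn ϱ (Set.Ici 0))
    (h0 : ϱ 0 = 0) (hpos : ∀ u : ℝ, 0 < u → 0 < ϱ u)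
    (f : ℝ → ℝ) (hf : ContinuousOn f (Set.Icc 0 T))
    (hfnn : ∀ t ∈ Set.Icc (0:ℝ) T, 0 ≤ f t)
    (hineq : ∀ t ∈ Set.Icc (0:ℝ) T,
      f t ≤ a + b * t ^ α * ∫ s in (0:ℝ)..t, (t - s) ^ (-α) * s ^ (-α) * ϱ (f s))
    (ε : ℝ) (hε : 0 < ε) :
    ∀ t ∈ Set.Icc (0:ℝ) T, (f t + ε) ^ q ≤ 2 ^ (q-1) * (a+ε) ^ q
      + (2 ^ (q-1) * b ^ q
          * ((∫ u in (0:ℝ)..1, (1 - u) ^ (-(p*α)) * u ^ (-(p*α)))) ^ (q/p))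
        * (t ^ (q * (1/p - α)) * ∫ s in (0:ℝ)..t, (ϱ (f s + ε)) ^ q) := by
  -- basic numeric facts
  have hα0 : 0 < α := lt_trans (by norm_num) hα
  have hp0 : 0 < p := lt_trans one_pos hp1
  have h1p_pos : 0 < 1/p := by positivity
  have h1p_lt : 1/p < 1 := by rw [div_lt_one hp0]; exact hp1
  have hq_inv : 1/q = 1 - 1/p := by linarith
  have hq_inv_pos : 0 < 1/q := by rw [hq_inv]; linarith
  have hq0 : 0 < q := by
    by_contra hcon
    push_neg at hcon
    have : 1/q ≤ 0 := one_div_nonpos.mpr hcon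
    linarith
  have hq1 : 1 < q := by
    have h' : 1/q < 1 := by rw [hq_inv]; linarith
    rwa [div_lt_one hq0] at h'
  have hpα : p*α < 1 := by
    have h' := mul_lt_mul_of_pos_left hαp hp0
    rwa [mul_one_div, div_self hp0.ne'] at h'
  have hpα0 : 0 < p*α := by positivity
  have hγ : 0 < q * (1/p - α) := mul_pos hq0 (by linarith)
  set C := ∫ u in (0:ℝ)..1, (1-u)^(-(p*α)) * u^(-(p*α)) with hCdef
  have hC0 : 0 ≤ C := intervalIntegral.integral_nonneg zero_le_one fun u hu =>
    mul_nonneg (Real.rpow_nonneg (by linarith [hu.2]) _) (Real.rpow_nonneg hu.1 _)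
  -- continuity of the regularized composition
  have hϱcont : ContinuousOn ϱ (Set.Ioi 0) := by
    have := hconc.continuousOn_interior
    rwa [interior_Ici] at this
  have hφ'cont : ContinuousOn (fun s => ϱ (f s + ε)) (Set.Icc 0 T) := by
    refine hϱcont.comp (hf.add continuousOn_const) fun s hs => ?_
    exact mem_Ioi.mpr (by linarith [hfnn s hs])
  have hφ'nn : ∀ s ∈ Set.Icc (0:ℝ) T, 0 ≤ ϱ (f s + ε) := fun s hs =>
    (hpos _ (by linarith [hfnn s hs])).le
  -- main estimate
  intro t ht
  have hφ'contt : ContinuousOn (fun s => ϱ (f s + ε)) (Set.Icc 0 t) :=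
    hφ'cont.mono (Set.Icc_subset_Icc le_rfl ht.2)
  have hInn : 0 ≤ ∫ s in (0:ℝ)..t, (ϱ (f s + ε)) ^ q :=
    intervalIntegral.integral_nonneg ht.1 fun s hs =>
      Real.rpow_nonneg (hφ'nn s ⟨hs.1, le_trans hs.2 ht.2⟩) _
  rcases eq_or_lt_of_le ht.1 with ht0 | ht0
  · -- t = 0
    rw [← ht0]
    have hf0 : f 0 ≤ a := by
      have := hineq 0 (Set.left_mem_Icc.mpr hT.le)
      simpa [Real.zero_rpow hα0.ne'] using this
    have h1 : (f 0 + ε) ^ q ≤ (a + ε) ^ q :=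
      Real.rpow_le_rpow (by linarith [hfnn 0 (Set.left_mem_Icc.mpr hT.le)]) (by linarith) hq0.le
    have h2 : (1:ℝ) ≤ 2 ^ (q-1) := by
      rw [show (1:ℝ) = (2:ℝ) ^ (0:ℝ) by simp]
      exact Real.rpow_le_rpow_left_iff (by norm_num) |>.mpr (by linarith)
    have h3 : (a + ε) ^ q ≤ 2 ^ (q-1) * (a+ε) ^ q :=
      le_mul_of_one_le_left (Real.rpow_nonneg (by linarith) _) h2
    have h4 : (0:ℝ) ^ (q * (1/p - α)) = 0 := Real.zero_rpow hγ.ne'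
    rw [h4]
    have hBc : 0 ≤ 2 ^ (q-1) * b ^ q * C ^ (q/p) :=
      mul_nonneg (mul_nonneg (Real.rpow_pos_of_pos two_pos _).le (Real.rpow_nonneg hb _))
        (Real.rpow_nonneg hC0 _)
    nlinarith [intervalIntegral.integral_same (μ := volume) (f := fun s => (ϱ (f s + ε)) ^ q) (a := (0:ℝ))]
  · -- 0 < t
    set K : ℝ → ℝ := fun s => (t - s) ^ (-α) * s ^ (-α) with hKdef
    have hker : IntervalIntegrable K volume 0 t := bihari_ker_int hα0 hα1 ht0
    have hK_Icc : IntegrableOn K (Set.Icc 0 t) := by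
      rwa [intervalIntegrable_iff_integrableOn_Icc_of_le ht0.le] at hker
    have hKφ'_int : IntervalIntegrable (fun s => K s * ϱ (f s + ε)) volume 0 t := by
      apply IntegrableOn.intervalIntegrable
      rw [uIcc_of_le ht0.le]
      exact hK_Icc.mul_continuousOn hφ'contt isCompact_Icc
    have hKnn : ∀ s ∈ Set.Icc (0:ℝ) t, 0 ≤ K s := fun s hs =>
      mul_nonneg (Real.rpow_nonneg (by linarith [hs.2]) _) (Real.rpow_nonneg hs.1 _)
    have hmeasK : Measurable K := by fun_prop
    have hsub : Set.Ioc (0:ℝ) t ⊆ Set.Icc 0 T := fun s hs => ⟨hs.1.le, le_trans hs.2 ht.2⟩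
    have hϱf_nn : ∀ s ∈ Set.Icc (0:ℝ) T, 0 ≤ ϱ (f s) := by
      intro s hs
      rcases eq_or_lt_of_le (hfnn s hs) with h | h
      · simp [← h, h0]
      · exact (hpos _ h).le
    have hKφ_int : IntervalIntegrable (fun s => K s * ϱ (f s)) volume 0 t := by
      rw [intervalIntegrable_iff_integrableOn_Ioc_of_le ht0.le]
      have hint : IntegrableOn (fun s => K s * ϱ (f s + ε)) (Set.Ioc 0 t) := by
        rwa [intervalIntegrable_iff_integrableOn_Ioc_of_le ht0.le] at hKφ'_int
      refine Integrable.mono' hint ?_ ?_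
      · have hϱm : Monotone (fun z : ℝ => ϱ (max z 0)) := fun z1 z2 h =>
          hmono (Set.mem_Ici.mpr (le_max_right _ _)) (Set.mem_Ici.mpr (le_max_right _ _)) (max_le_max h le_rfl)
        have hfaem : AEMeasurable f (volume.restrict (Set.Ioc 0 t)) :=
          ((hf.mono hsub).aemeasurable measurableSet_Ioc)
        have h2 : AEMeasurable (fun s => K s * ϱ (max (f s) 0))
            (volume.restrict (Set.Ioc 0 t)) :=
          hmeasK.aemeasurable.mul (hϱm.measurable.comp_aemeasurable hfaem)
        refine h2.aestronglyMeasurable.congr ?_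
        refine (ae_restrict_iff' measurableSet_Ioc).mpr (ae_of_all _ fun s hs => ?_)
        show K s * ϱ (max (f s) 0) = K s * ϱ (f s)
        rw [max_eq_left (hfnn s (hsub hs))]
      · refine (ae_restrict_iff' measurableSet_Ioc).mpr (ae_of_all _ fun s hs => ?_)
        have h1 : 0 ≤ K s := hKnn s ⟨hs.1.le, hs.2⟩
        have h3 : 0 ≤ ϱ (f s) := hϱf_nn s (hsub hs)
        have h4 : ϱ (f s) ≤ ϱ (f s + ε) :=
          hmono (Set.mem_Ici.mpr (hfnn s (hsub hs)))
            (Set.mem_Ici.mpr (by linarith [hfnn s (hsub hs)])) (by linarith)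
        rw [Real.norm_eq_abs, abs_of_nonneg (mul_nonneg h1 h3)]
        exact mul_le_mul_of_nonneg_left h4 h1
    have hJle : (∫ s in (0:ℝ)..t, K s * ϱ (f s)) ≤ ∫ s in (0:ℝ)..t, K s * ϱ (f s + ε) := by
      refine intervalIntegral.integral_mono_on ht0.le hKφ_int hKφ'_int fun s hs => ?_
      have h2 : 0 ≤ f s := hfnn s ⟨hs.1, le_trans hs.2 ht.2⟩
      exact mul_le_mul_of_nonneg_left
        (hmono (Set.mem_Ici.mpr h2) (Set.mem_Ici.mpr (by linarith)) (by linarith)) (hKnn s hs)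
    -- Hölder
    have hconj : Real.HolderConjugate p q := Real.holderConjugate_iff.mpr ⟨hp1, by rw [← one_div, ← one_div]; exact hpq⟩
    set μ := volume.restrict (Set.Ioc (0:ℝ) t) with hμdef
    have hKmem : MemLp K (ENNReal.ofReal p) μ := by
      have hA : ENNReal.ofReal p ≠ 0 := by simp [ENNReal.ofReal_eq_zero, not_le, hp0]
      have hB : ENNReal.ofReal p ≠ ⊤ := ENNReal.ofReal_ne_top
      rw [← memLp_norm_rpow_iff hmeasK.aestronglyMeasurable hA hB,
        ENNReal.toReal_ofReal hp0.le, ENNReal.div_self hA hB, memLp_one_iff_integrable]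
      have hKp_int : IntegrableOn (fun s => (t - s) ^ (-(p*α)) * s ^ (-(p*α)))
          (Set.Ioc 0 t) := by
        have h' := bihari_ker_int hpα0 hpα ht0
        rwa [intervalIntegrable_iff_integrableOn_Ioc_of_le ht0.le] at h'
      refine hKp_int.congr_fun (fun s hs => ?_) measurableSet_Ioc
      have h1 : (0:ℝ) ≤ t - s := by linarith [hs.2]
      have h2 : (0:ℝ) ≤ s := hs.1.le
      rw [Real.norm_eq_abs,
        abs_of_nonneg (mul_nonneg (Real.rpow_nonneg h1 _) (Real.rpow_nonneg h2 _)),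
        Real.mul_rpow (Real.rpow_nonneg h1 _) (Real.rpow_nonneg h2 _),
        ← Real.rpow_mul h1, ← Real.rpow_mul h2, show (-α)*p = -(p*α) by ring]
    have hφ'mem : MemLp (fun s => ϱ (f s + ε)) (ENNReal.ofReal q) μ := by
      have hA : ENNReal.ofReal q ≠ 0 := by simp [ENNReal.ofReal_eq_zero, not_le, hq0]
      have hB : ENNReal.ofReal q ≠ ⊤ := ENNReal.ofReal_ne_top
      have haesm : AEStronglyMeasurable (fun s => ϱ (f s + ε)) μ :=
        (hφ'contt.mono Ioc_subset_Icc_self).aestronglyMeasurable measurableSet_Ioc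
      rw [← memLp_norm_rpow_iff haesm hA hB, ENNReal.toReal_ofReal hq0.le,
        ENNReal.div_self hA hB, memLp_one_iff_integrable]
      have hci : IntegrableOn (fun s => (ϱ (f s + ε)) ^ q) (Set.Icc 0 t) :=
        (hφ'contt.rpow_const fun s _ => Or.inr hq0.le).integrableOn_Icc
      refine (hci.mono_set Ioc_subset_Icc_self).congr_fun (fun s hs => ?_) measurableSet_Ioc
      rw [Real.norm_eq_abs, abs_of_nonneg (hφ'nn s (hsub hs))]
    have hHold : (∫ s, K s * ϱ (f s + ε) ∂μ)
        ≤ (∫ s, K s ^ p ∂μ) ^ (1/p) * (∫ s, (ϱ (f s + ε)) ^ q ∂μ) ^ (1/q) := by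
      refine MeasureTheory.integral_mul_le_Lp_mul_Lq_of_nonneg hconj ?_ ?_ hKmem hφ'mem
      · exact (ae_restrict_iff' measurableSet_Ioc).mpr
          (ae_of_all _ fun s hs => hKnn s ⟨hs.1.le, hs.2⟩)
      · exact (ae_restrict_iff' measurableSet_Ioc).mpr
          (ae_of_all _ fun s hs => hφ'nn s (hsub hs))
    -- evaluation of the kernel integral
    have hKp_val : (∫ s, K s ^ p ∂μ) = t ^ (1 - 2*(p*α)) * C := by
      have e1 : (∫ s, K s ^ p ∂μ) = ∫ s in (0:ℝ)..t, (t - s) ^ (-(p*α)) * s ^ (-(p*α)) := by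
        rw [intervalIntegral.integral_of_le ht0.le]
        refine setIntegral_congr_fun measurableSet_Ioc fun s hs => ?_
        have h1 : (0:ℝ) ≤ t - s := by linarith [hs.2]
        have h2 : (0:ℝ) ≤ s := hs.1.le
        simp only [hKdef]
        rw [Real.mul_rpow (Real.rpow_nonneg h1 _) (Real.rpow_nonneg h2 _),
          ← Real.rpow_mul h1, ← Real.rpow_mul h2, show (-α)*p = -(p*α) by ring]
      rw [e1]
      have e2 := intervalIntegral.integral_comp_mul_left
        (fun s => (t - s) ^ (-(p*α)) * s ^ (-(p*α))) (ne_of_gt ht0) (a := 0) (b := 1)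
      rw [mul_zero, mul_one] at e2
      have e3 : (∫ u in (0:ℝ)..1,
          (t - t * u) ^ (-(p*α)) * (t * u) ^ (-(p*α))) = t ^ (-(2*(p*α))) * C := by
        rw [hCdef, ← intervalIntegral.integral_const_mul]
        refine intervalIntegral.integral_congr fun u hu => ?_
        rw [uIcc_of_le zero_le_one] at hu
        show (t - t * u) ^ (-(p*α)) * (t * u) ^ (-(p*α)) = t ^ (-(2*(p*α))) * ((1-u) ^ (-(p*α)) * u ^ (-(p*α)))
        rw [show t - t*u = t * (1-u) by ring,
          Real.mul_rpow ht0.le (by linarith [hu.2]), Real.mul_rpow ht0.le hu.1,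
          show t ^ (-(p*α)) * (1-u)^(-(p*α)) * (t ^ (-(p*α)) * u ^ (-(p*α)))
            = (t ^ (-(p*α)) * t ^ (-(p*α))) * ((1-u)^(-(p*α)) * u^(-(p*α))) by ring,
          ← Real.rpow_add ht0, show -(p*α) + -(p*α) = -(2*(p*α)) by ring]
      beta_reduce at e2
      rw [e3] at e2
      have e4 : (∫ s in (0:ℝ)..t, (t - s) ^ (-(p*α)) * s ^ (-(p*α)))
          = t * (t ^ (-(2*(p*α))) * C) := by
        rw [e2, smul_eq_mul, ← mul_assoc, mul_inv_cancel₀ (ne_of_gt ht0), one_mul]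
      rw [e4, ← mul_assoc, show (1 : ℝ) - 2*(p*α) = 1 + (-(2*(p*α))) by ring,
        Real.rpow_add ht0, Real.rpow_one]
    -- combine
    set Iq := ∫ s in (0:ℝ)..t, (ϱ (f s + ε)) ^ q with hIqdef
    have hμ1 : (∫ s in (0:ℝ)..t, K s * ϱ (f s + ε)) = ∫ s, K s * ϱ (f s + ε) ∂μ :=
      intervalIntegral.integral_of_le ht0.le
    have hμ2 : Iq = ∫ s, (ϱ (f s + ε)) ^ q ∂μ := intervalIntegral.integral_of_le ht0.le
    have hchain : f t + ε ≤ (a + ε) + b * t^α *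
        ((t ^ (1 - 2*(p*α)) * C) ^ (1/p) * Iq ^ (1/q)) := by
      have h1 := hineq t ht
      have hbt : 0 ≤ b * t^α := mul_nonneg hb (Real.rpow_nonneg ht0.le _)
      have h2 : (∫ s in (0:ℝ)..t, K s * ϱ (f s))
          ≤ (t ^ (1 - 2*(p*α)) * C) ^ (1/p) * Iq ^ (1/q) := by
        refine le_trans hJle ?_
        rw [hμ1, ← hKp_val, hμ2]
        exact hHold
      have h3 := mul_le_mul_of_nonneg_left h2 hbt
      have h4 : (∫ s in (0:ℝ)..t, (t - s) ^ (-α) * s ^ (-α) * ϱ (f s))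
          = ∫ s in (0:ℝ)..t, K s * ϱ (f s) := rfl
      rw [h4] at h1
      linarith
    -- raise to the power q
    have hYnn : (0:ℝ) ≤ t ^ (1 - 2*(p*α)) * C := mul_nonneg (Real.rpow_nonneg ht0.le _) hC0
    have hIqnn : 0 ≤ Iq := hInn
    have hXnn : 0 ≤ b * t^α * ((t ^ (1 - 2*(p*α)) * C) ^ (1/p) * Iq ^ (1/q)) :=
      mul_nonneg (mul_nonneg hb (Real.rpow_nonneg ht0.le _))
        (mul_nonneg (Real.rpow_nonneg hYnn _) (Real.rpow_nonneg hIqnn _))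
    have hfε : 0 ≤ f t + ε := by linarith [hfnn t ht]
    have hfinal1 : (f t + ε) ^ q
        ≤ ((a + ε) + b * t^α * ((t ^ (1 - 2*(p*α)) * C) ^ (1/p) * Iq ^ (1/q))) ^ q :=
      Real.rpow_le_rpow hfε hchain hq0.le
    have hfinal2 := bihari_two_rpow (by linarith : (0:ℝ) ≤ a + ε) hXnn hq1.le
    -- compute X^q
    have hXq : (b * t^α * ((t ^ (1 - 2*(p*α)) * C) ^ (1/p) * Iq ^ (1/q))) ^ q
        = b ^ q * C ^ (q/p) * (t ^ (q*(1/p - α)) * Iq) := by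
      have m1 : 0 ≤ t ^ α := Real.rpow_nonneg ht0.le _
      have m2 : 0 ≤ (t ^ (1 - 2*(p*α)) * C) ^ (1/p) := Real.rpow_nonneg hYnn _
      have m3 : 0 ≤ Iq ^ (1/q) := Real.rpow_nonneg hIqnn _
      rw [Real.mul_rpow (mul_nonneg hb m1) (mul_nonneg m2 m3),
        Real.mul_rpow hb m1, Real.mul_rpow m2 m3,
        ← Real.rpow_mul ht0.le α q,
        ← Real.rpow_mul hYnn (1/p) q,
        one_div q, Real.rpow_inv_rpow hIqnn hq0.ne',
        show (1/p) * q = q/p by ring,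
        Real.mul_rpow (Real.rpow_nonneg ht0.le _) hC0,
        ← Real.rpow_mul ht0.le (1 - 2*(p*α)) (q/p)]
      have hT2 : t ^ (α*q) * t ^ ((1 - 2*(p*α)) * (q/p)) = t ^ (q*(1/p - α)) := by
        rw [← Real.rpow_add ht0]
        congr 1
        field_simp
        ring
      rw [← hT2]
      ring
    rw [hXq] at hfinal2
    have hend : 2 ^ (q-1) * ((a+ε)^q + b ^ q * C ^ (q/p) * (t ^ (q*(1/p - α)) * Iq))
        = 2 ^ (q-1) * (a+ε) ^ q
          + (2 ^ (q-1) * b ^ q * C ^ (q/p)) * (t ^ (q*(1/p - α)) * Iq) := by ring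
    linarith

theorem bihari_aux (α a b T p q : ℝ) (hα : 1/2 < α) (hα1 : α < 1)
    (hp1 : 1 < p) (hp2 : p < 2) (hαp : α < 1/p) (hpq : 1/p + 1/q = 1)
    (ha : 0 ≤ a) (hb : 0 ≤ b) (hT : 0 < T)
    (ϱ : ℝ → ℝ) (hconc : ConcaveOn ℝ (Set.Ici 0) ϱ)
    (hmono : MonotoneOn ϱ (Set.Ici 0))
    (h0 : ϱ 0 = 0) (hpos : ∀ u : ℝ, 0 < u → 0 < ϱ u)
    (f : ℝ → ℝ) (hf : ContinuousOn f (Set.Icc 0 T))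
    (hfnn : ∀ t ∈ Set.Icc (0:ℝ) T, 0 ≤ f t)
    (hineq : ∀ t ∈ Set.Icc (0:ℝ) T,
      f t ≤ a + b * t ^ α * ∫ s in (0:ℝ)..t, (t - s) ^ (-α) * s ^ (-α) * ϱ (f s))
    (ε : ℝ) (hε : 0 < ε) (t₀ : ℝ) (ht₀ : t₀ ∈ Set.Icc (0:ℝ) T) :
    bihariF ϱ q ((f t₀ + ε) ^ q) ≤ bihariF ϱ q (2 ^ (q-1) * (a+ε) ^ q)
      + 2 ^ (q-1) * b ^ q
        * ((∫ u in (0:ℝ)..1, (1 - u) ^ (-(p*α)) * u ^ (-(p*α)))) ^ (q/p)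
        * t₀ ^ (q * (1/p - α) + 1) := by
  obtain ⟨ht₀0, ht₀T⟩ := ht₀
  -- numeric facts
  have hα0 : 0 < α := lt_trans (by norm_num) hα
  have hp0 : 0 < p := lt_trans one_pos hp1
  have h1p_pos : 0 < 1/p := by positivity
  have h1p_lt : 1/p < 1 := by rw [div_lt_one hp0]; exact hp1
  have hq_inv : 1/q = 1 - 1/p := by linarith
  have hq_inv_pos : 0 < 1/q := by rw [hq_inv]; linarith
  have hq0 : 0 < q := by
    by_contra hcon
    push_neg at hcon
    have : 1/q ≤ 0 := one_div_nonpos.mpr hcon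
    linarith
  have hq1 : 1 < q := by
    have h' : 1/q < 1 := by rw [hq_inv]; linarith
    rwa [div_lt_one hq0] at h'
  have step1 := bihari_step1 α a b T p q hα hα1 hp1 hp2 hαp hpq ha hb hT ϱ hconc hmono
    h0 hpos f hf hfnn hineq ε hε
  set C := ∫ u in (0:ℝ)..1, (1-u)^(-(p*α)) * u^(-(p*α)) with hCdef
  have hC0 : 0 ≤ C := intervalIntegral.integral_nonneg zero_le_one fun u hu =>
    mul_nonneg (Real.rpow_nonneg (by linarith [hu.2]) _) (Real.rpow_nonneg hu.1 _)
  set γ := q * (1/p - α) with hγdef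
  have hγ : 0 < γ := mul_pos hq0 (by linarith)
  set Aε := 2 ^ (q-1) * (a+ε) ^ q with hAdef
  have hAε : 0 < Aε := mul_pos (Real.rpow_pos_of_pos two_pos _)
    (Real.rpow_pos_of_pos (by linarith) _)
  set Bc := 2 ^ (q-1) * b ^ q * C ^ (q/p) with hBdef
  have hBc : 0 ≤ Bc :=
    mul_nonneg (mul_nonneg (Real.rpow_pos_of_pos two_pos _).le (Real.rpow_nonneg hb _))
      (Real.rpow_nonneg hC0 _)
  set φ : ℝ → ℝ := fun s => (ϱ (f s + ε)) ^ q with hφdef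
  set I : ℝ → ℝ := fun r => ∫ s in (0:ℝ)..r, φ s with hIdef
  set v : ℝ → ℝ := fun r => Aε + Bc * (r ^ γ * I r) with hvdef
  have hstep1' : ∀ t ∈ Set.Icc (0:ℝ) T, (f t + ε) ^ q ≤ v t := fun t ht' => step1 t ht'
  -- continuity and positivity of φ, I, v
  have hϱcont : ContinuousOn ϱ (Set.Ioi 0) := by
    have := hconc.continuousOn_interior
    rwa [interior_Ici] at this
  have hφ'cont : ContinuousOn (fun s => ϱ (f s + ε)) (Set.Icc 0 T) := by
    refine hϱcont.comp (hf.add continuousOn_const) fun s hs => ?_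
    exact mem_Ioi.mpr (by linarith [hfnn s hs])
  have hφcont : ContinuousOn φ (Set.Icc 0 T) :=
    hφ'cont.rpow_const fun s _ => Or.inr hq0.le
  have hφnn : ∀ s ∈ Set.Icc (0:ℝ) T, 0 ≤ φ s := fun s hs =>
    Real.rpow_nonneg (hpos _ (by linarith [hfnn s hs])).le _
  have hmemT : ∀ r : ℝ, r ∈ Set.Icc (0:ℝ) T → r ∈ Set.uIcc (0:ℝ) T := by
    intro r hr; rwa [Set.uIcc_of_le hT.le]
  have hφII : ∀ r₁ r₂ : ℝ, r₁ ∈ Set.Icc (0:ℝ) T → r₂ ∈ Set.Icc (0:ℝ) T →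
      IntervalIntegrable φ volume r₁ r₂ := by
    intro r₁ r₂ h1 h2
    refine (hφcont.mono ?_).intervalIntegrable
    rw [← Set.uIcc_of_le hT.le]
    exact Set.uIcc_subset_uIcc (hmemT r₁ h1) (hmemT r₂ h2)
  have hInn : ∀ r ∈ Set.Icc (0:ℝ) T, 0 ≤ I r := fun r hr =>
    intervalIntegral.integral_nonneg hr.1 fun s hs => hφnn s ⟨hs.1, le_trans hs.2 hr.2⟩
  have hImono : ∀ r₁ r₂ : ℝ, r₁ ∈ Set.Icc (0:ℝ) T → r₂ ∈ Set.Icc (0:ℝ) T → r₁ ≤ r₂ →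
      I r₁ ≤ I r₂ := by
    intro r₁ r₂ h1 h2 h12
    have he : I r₂ = I r₁ + ∫ s in r₁..r₂, φ s :=
      (intervalIntegral.integral_add_adjacent_intervals
        (hφII 0 r₁ (Set.left_mem_Icc.mpr hT.le) h1) (hφII r₁ r₂ h1 h2)).symm
    have hnn : 0 ≤ ∫ s in r₁..r₂, φ s :=
      intervalIntegral.integral_nonneg h12 fun s hs =>
        hφnn s ⟨le_trans h1.1 hs.1, le_trans hs.2 h2.2⟩
    linarith
  have hvmono : MonotoneOn v (Set.Icc 0 T) := by
    intro r₁ h1 r₂ h2 h12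
    have hm : r₁ ^ γ * I r₁ ≤ r₂ ^ γ * I r₂ :=
      mul_le_mul (Real.rpow_le_rpow h1.1 h12 hγ.le) (hImono r₁ r₂ h1 h2 h12)
        (hInn r₁ h1) (Real.rpow_nonneg h2.1 _)
    have := mul_le_mul_of_nonneg_left hm hBc
    show Aε + Bc * (r₁ ^ γ * I r₁) ≤ Aε + Bc * (r₂ ^ γ * I r₂)
    linarith
  have hvpos : ∀ r ∈ Set.Icc (0:ℝ) T, 0 < v r := by
    intro r hr
    have h1 : 0 ≤ Bc * (r ^ γ * I r) :=
      mul_nonneg hBc (mul_nonneg (Real.rpow_nonneg hr.1 _) (hInn r hr))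
    show 0 < Aε + Bc * (r ^ γ * I r)
    linarith
  have hIcont : ContinuousOn I (Set.Icc 0 T) := by
    have h' : IntegrableOn φ (Set.uIcc 0 T) volume := by
      rw [Set.uIcc_of_le hT.le]; exact hφcont.integrableOn_Icc
    have := intervalIntegral.continuousOn_primitive_interval h'
    rwa [Set.uIcc_of_le hT.le] at this
  have hvcont : ContinuousOn v (Set.Icc 0 T) := by
    apply continuousOn_const.add
    apply continuousOn_const.mul
    exact (continuousOn_id.rpow_const fun r _ => Or.inr hγ.le).mul hIcont
  have hsub2 : Set.Icc (0:ℝ) t₀ ⊆ Set.Icc 0 T := Set.Icc_subset_Icc le_rfl ht₀T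
  -- derivative of v
  have hvderiv : ∀ τ ∈ Set.Ioo (0:ℝ) t₀,
      HasDerivAt v (Bc * (γ * τ ^ (γ-1) * I τ + τ ^ γ * φ τ)) τ := by
    intro τ hτ
    have hτT : τ ∈ Set.Icc (0:ℝ) T := ⟨hτ.1.le, le_trans hτ.2.le ht₀T⟩
    have hτTo : τ < T := lt_of_lt_of_le hτ.2 ht₀T
    have hI' : HasDerivAt I (φ τ) τ := by
      refine intervalIntegral.integral_hasDerivAt_right
        (hφII 0 τ (Set.left_mem_Icc.mpr hT.le) hτT) ?_ ?_
      · exact ContinuousOn.stronglyMeasurableAtFilter isOpen_Ioo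
          (hφcont.mono Set.Ioo_subset_Icc_self) τ ⟨hτ.1, hτTo⟩
      · exact hφcont.continuousAt (Icc_mem_nhds hτ.1 hτTo)
    have hr' : HasDerivAt (fun r : ℝ => r ^ γ) (γ * τ ^ (γ-1)) τ :=
      Real.hasDerivAt_rpow_const (Or.inl hτ.1.ne')
    exact ((hr'.mul hI').const_mul Bc).const_add Aε
  -- the decreasing auxiliary function
  set D : ℝ → ℝ := fun r => bihariF ϱ q (v r) - Bc * r ^ (γ+1) with hDdef
  have hFd : ∀ y : ℝ, 0 < y → HasDerivAt (bihariF ϱ q) (1 / bihariW ϱ q y) y :=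
    fun y hy => bihariF_hasDeriv hq0 hconc hpos hy
  have hDderiv : ∀ τ ∈ Set.Ioo (0:ℝ) t₀,
      HasDerivAt D ((1 / bihariW ϱ q (v τ)) * (Bc * (γ * τ ^ (γ-1) * I τ + τ ^ γ * φ τ))
        - Bc * ((γ+1) * τ ^ γ)) τ := by
    intro τ hτ
    have hτT : τ ∈ Set.Icc (0:ℝ) T := ⟨hτ.1.le, le_trans hτ.2.le ht₀T⟩
    have h1 := (hFd (v τ) (hvpos τ hτT)).comp τ (hvderiv τ hτ)
    have h2 : HasDerivAt (fun r : ℝ => Bc * r ^ (γ+1)) (Bc * ((γ+1) * τ ^ (γ+1-1))) τ :=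
      (Real.hasDerivAt_rpow_const (Or.inl hτ.1.ne')).const_mul Bc
    rw [show γ+1-1 = γ by ring] at h2
    exact h1.sub h2
  have hDnonpos : ∀ τ ∈ Set.Ioo (0:ℝ) t₀,
      (1 / bihariW ϱ q (v τ)) * (Bc * (γ * τ ^ (γ-1) * I τ + τ ^ γ * φ τ))
        - Bc * ((γ+1) * τ ^ γ) ≤ 0 := by
    intro τ hτ
    have hτT : τ ∈ Set.Icc (0:ℝ) T := ⟨hτ.1.le, le_trans hτ.2.le ht₀T⟩
    have hfτ : 0 ≤ f τ := hfnn τ hτT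
    have hgpos : 0 < (f τ + ε) ^ q := Real.rpow_pos_of_pos (by linarith) _
    have hg : (f τ + ε) ^ q ≤ v τ := hstep1' τ hτT
    have hwpos : 0 < bihariW ϱ q (v τ) := bihariW_pos hpos (hvpos τ hτT)
    set w := bihariW ϱ q (v τ) with hwdef
    have hφw : ∀ s ∈ Set.Icc (0:ℝ) T, φ s = bihariW ϱ q ((f s + ε) ^ q) := by
      intro s hs
      have : ((f s + ε) ^ q) ^ (1/q) = f s + ε := by
        rw [one_div, Real.rpow_rpow_inv (by linarith [hfnn s hs]) hq0.ne']
      simp only [bihariW, this, hφdef]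
    have hφle : φ τ ≤ w := by
      rw [hφw τ hτT]
      exact bihariW_mono hq0 hmono hpos hgpos hg
    have hIle : I τ ≤ τ * w := by
      have hptwise : ∀ s ∈ Set.Icc (0:ℝ) τ, φ s ≤ w := by
        intro s hs
        have hsT : s ∈ Set.Icc (0:ℝ) T := ⟨hs.1, le_trans hs.2 hτT.2⟩
        have h1 : (f s + ε) ^ q ≤ v s := hstep1' s hsT
        have h2 : v s ≤ v τ := hvmono hsT hτT hs.2
        have h3 : 0 < (f s + ε) ^ q := Real.rpow_pos_of_pos (by linarith [hfnn s hsT]) _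
        rw [hφw s hsT]
        exact bihariW_mono hq0 hmono hpos h3 (le_trans h1 h2)
      have := intervalIntegral.integral_mono_on hτ.1.le
        (hφII 0 τ (Set.left_mem_Icc.mpr hT.le) hτT) intervalIntegrable_const hptwise
      simpa [smul_eq_mul] using this
    have hτγ : τ ^ (γ-1) * τ = τ ^ γ := by
      have h' := Real.rpow_add_one hτ.1.ne' (γ-1)
      rw [show γ-1+1 = γ by ring] at h'
      rw [← h']
    have h5 : Bc * (γ * τ ^ (γ-1) * I τ + τ ^ γ * φ τ) ≤ Bc * ((γ+1) * τ ^ γ) * w := by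
      have ht1 : γ * τ ^ (γ-1) * I τ ≤ γ * τ ^ (γ-1) * (τ * w) :=
        mul_le_mul_of_nonneg_left hIle
          (mul_nonneg hγ.le (Real.rpow_nonneg hτ.1.le _))
      have ht2 : τ ^ γ * φ τ ≤ τ ^ γ * w :=
        mul_le_mul_of_nonneg_left hφle (Real.rpow_nonneg hτ.1.le _)
      have ht3 : γ * τ ^ (γ-1) * (τ * w) + τ ^ γ * w = (γ+1) * τ ^ γ * w := by
        rw [← hτγ]; ring
      have := mul_le_mul_of_nonneg_left (add_le_add ht1 ht2) hBc
      rw [ht3] at this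
      linarith [this]
    have h6 := mul_le_mul_of_nonneg_left h5 (one_div_nonneg.mpr hwpos.le)
    have h7 : (1 / w) * (Bc * ((γ+1) * τ ^ γ) * w) = Bc * ((γ+1) * τ ^ γ) := by
      field_simp
    linarith
  have hDcont : ContinuousOn D (Set.Icc 0 t₀) := by
    have hFc : ContinuousOn (bihariF ϱ q) (Set.Ioi 0) := fun y hy =>
      (hFd y hy).continuousAt.continuousWithinAt
    refine ContinuousOn.sub
      (hFc.comp (hvcont.mono hsub2) fun r hr => hvpos r (hsub2 hr)) ?_
    exact continuousOn_const.mul (continuousOn_id.rpow_const fun r _ => Or.inr (by linarith))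
  have hanti : AntitoneOn D (Set.Icc 0 t₀) := by
    refine antitoneOn_of_deriv_nonpos (convex_Icc 0 t₀) hDcont ?_ ?_
    · rw [interior_Icc]
      exact fun τ hτ => (hDderiv τ hτ).differentiableAt.differentiableWithinAt
    · rw [interior_Icc]
      intro τ hτ
      rw [(hDderiv τ hτ).deriv]
      exact hDnonpos τ hτ
  have hD0 : D t₀ ≤ D 0 :=
    hanti (Set.left_mem_Icc.mpr ht₀0) (Set.right_mem_Icc.mpr ht₀0) ht₀0
  have hv0 : v 0 = Aε := by
    have hI0 : I 0 = 0 := intervalIntegral.integral_same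
    show Aε + Bc * ((0:ℝ) ^ γ * I 0) = Aε
    rw [hI0, Real.zero_rpow hγ.ne']
    ring
  have hD0v : D 0 = bihariF ϱ q Aε := by
    show bihariF ϱ q (v 0) - Bc * (0:ℝ) ^ (γ+1) = bihariF ϱ q Aε
    rw [hv0, Real.zero_rpow (by positivity : γ + 1 ≠ 0)]
    ring
  have hDt₀ : D t₀ = bihariF ϱ q (v t₀) - Bc * t₀ ^ (γ+1) := rfl
  have hlast : bihariF ϱ q ((f t₀ + ε) ^ q) ≤ bihariF ϱ q (v t₀) := by
    refine bihariF_le hq0 hconc hpos ?_ (hstep1' t₀ ⟨ht₀0, ht₀T⟩)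
    exact Real.rpow_pos_of_pos (by linarith [hfnn t₀ (Set.mem_Icc.mpr ⟨ht₀0, ht₀T⟩)]) _
  rw [hDt₀, hD0v] at hD0
  linarith

lemma bihari_eps {ϱ : ℝ → ℝ} {q : ℝ} (hq0 : 0 < q)
    (hconc : ConcaveOn ℝ (Set.Ici 0) ϱ)
    (hpos : ∀ u : ℝ, 0 < u → 0 < ϱ u)
    {a : ℝ} (ha : 0 ≤ a) {δ : ℝ} (hδ : 0 < δ) :
    ∃ ε : ℝ, 0 < ε ∧
      bihariF ϱ q (2 ^ (q-1) * (a+ε) ^ q) ≤ bihariF ϱ q (2 ^ (q-1) * a ^ q) + δ := by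
  have h2q : (0:ℝ) < 2 ^ (q-1) := Real.rpow_pos_of_pos two_pos _
  rcases ha.eq_or_lt with h0a | h0a
  · -- a = 0
    obtain rfl : a = 0 := h0a.symm
    have hA0 : (2:ℝ) ^ (q-1) * (0:ℝ) ^ q = 0 := by
      rw [Real.zero_rpow hq0.ne', mul_zero]
    have he_tendsto : Filter.Tendsto (fun ε : ℝ => 2 ^ (q-1) * (0+ε) ^ q)
        (nhdsWithin 0 (Set.Ioi 0)) (nhds 0) := by
      have h1 : Filter.Tendsto (fun ε : ℝ => ε ^ q) (nhds 0) (nhds ((0:ℝ) ^ q)) :=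
        (Real.continuousAt_rpow_const 0 q (Or.inr hq0.le)).tendsto
      rw [Real.zero_rpow hq0.ne'] at h1
      have h2 := (h1.const_mul ((2:ℝ) ^ (q-1))).mono_left
        (nhdsWithin_le_nhds (s := Set.Ioi (0:ℝ)))
      rw [mul_zero] at h2
      simpa using h2
    have he_pos : ∀ ε : ℝ, 0 < ε → 0 < 2 ^ (q-1) * (0+ε) ^ q := fun ε hε =>
      mul_pos h2q (Real.rpow_pos_of_pos (by linarith) _)
    have he_lt1 : ∀ᶠ ε in nhdsWithin (0:ℝ) (Set.Ioi 0), 2 ^ (q-1) * (0+ε) ^ q < 1 :=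
      he_tendsto.eventually_lt_const one_pos
    have he_mem : ∀ᶠ ε in nhdsWithin (0:ℝ) (Set.Ioi 0), ε ∈ Set.Ioi (0:ℝ) :=
      self_mem_nhdsWithin
    by_cases hInt : IntervalIntegrable (fun u => 1 / bihariW ϱ q u) volume 0 1
    · -- integrable near 0
      have hP : ContinuousOn (fun c => ∫ u in (0:ℝ)..c, 1 / bihariW ϱ q u)
          (Set.Icc 0 1) := by
        have h' : IntegrableOn (fun u => 1 / bihariW ϱ q u) (Set.uIcc 0 1) volume := by
          rw [Set.uIcc_of_le zero_le_one,
            ← intervalIntegrable_iff_integrableOn_Icc_of_le zero_le_one]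
          exact hInt
        have := intervalIntegral.continuousOn_primitive_interval h'
        rwa [Set.uIcc_of_le zero_le_one] at this
      have hPtend : Filter.Tendsto (fun c => ∫ u in (0:ℝ)..c, 1 / bihariW ϱ q u)
          (nhdsWithin 0 (Set.Icc 0 1)) (nhds 0) := by
        have h := hP 0 (Set.left_mem_Icc.mpr zero_le_one)
        rw [ContinuousWithinAt, intervalIntegral.integral_same] at h
        exact h
      have hetend2 : Filter.Tendsto (fun ε : ℝ => 2 ^ (q-1) * (0+ε) ^ q)
          (nhdsWithin 0 (Set.Ioi 0)) (nhdsWithin 0 (Set.Icc 0 1)) := by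
        rw [tendsto_nhdsWithin_iff]
        refine ⟨he_tendsto, ?_⟩
        filter_upwards [he_lt1, he_mem] with ε h1 h2
        exact ⟨(he_pos ε h2).le, h1.le⟩
      have hPev : ∀ᶠ ε in nhdsWithin (0:ℝ) (Set.Ioi 0),
          (∫ u in (0:ℝ)..(2 ^ (q-1) * (0+ε) ^ q), 1 / bihariW ϱ q u) < δ :=
        (hPtend.comp hetend2).eventually_lt_const hδ
      have hform : ∀ c : ℝ, 0 ≤ c → c ≤ 1 →
          bihariF ϱ q c = (∫ u in (0:ℝ)..c, 1 / bihariW ϱ q u)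
            - (∫ u in (0:ℝ)..1, 1 / bihariW ϱ q u) := by
        intro c hc0 hc1
        have h1 : IntervalIntegrable (fun u => 1 / bihariW ϱ q u) volume 0 c :=
          hInt.mono_set (by
            rw [Set.uIcc_of_le hc0, Set.uIcc_of_le zero_le_one]
            exact Set.Icc_subset_Icc le_rfl hc1)
        have h2 : IntervalIntegrable (fun u => 1 / bihariW ϱ q u) volume c 1 :=
          hInt.mono_set (by
            rw [Set.uIcc_of_le hc1, Set.uIcc_of_le zero_le_one]
            exact Set.Icc_subset_Icc hc0 le_rfl)
        have hadd := intervalIntegral.integral_add_adjacent_intervals h1 h2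
        unfold bihariF
        rw [intervalIntegral.integral_symm]
        linarith
      obtain ⟨ε, hev, hlt1, hε0⟩ := (hPev.and (he_lt1.and he_mem)).exists
      refine ⟨ε, hε0, ?_⟩
      rw [hA0, hform _ (he_pos ε hε0).le hlt1.le, hform 0 le_rfl zero_le_one,
        intervalIntegral.integral_same]
      linarith
    · -- non-integrable near 0
      have hF0 : bihariF ϱ q 0 = 0 := by
        unfold bihariF
        rw [intervalIntegral.integral_symm, intervalIntegral.integral_undef hInt, neg_zero]
      obtain ⟨ε, hε1, hε0⟩ := (he_lt1.and he_mem).exists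
      refine ⟨ε, hε0, ?_⟩
      rw [hA0, hF0]
      have heε : 0 < 2 ^ (q-1) * (0+ε) ^ q := he_pos ε hε0
      have hneg : bihariF ϱ q (2 ^ (q-1) * (0+ε) ^ q) ≤ 0 := by
        unfold bihariF
        rw [intervalIntegral.integral_symm]
        have hnn : 0 ≤ ∫ u in (2 ^ (q-1) * (0+ε) ^ q)..(1:ℝ), 1 / bihariW ϱ q u := by
          refine intervalIntegral.integral_nonneg hε1.le fun u hu => ?_
          have hu0 : 0 < u := lt_of_lt_of_le heε hu.1
          have := bihariW_pos (q := q) hpos hu0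
          positivity
        linarith
      linarith
  · -- 0 < a
    have hA : 0 < 2 ^ (q-1) * a ^ q := mul_pos h2q (Real.rpow_pos_of_pos h0a _)
    have hFc : ContinuousAt (bihariF ϱ q) (2 ^ (q-1) * a ^ q) :=
      (bihariF_hasDeriv hq0 hconc hpos hA).continuousAt
    have he_tendsto : Filter.Tendsto (fun ε : ℝ => 2 ^ (q-1) * (a+ε) ^ q)
        (nhdsWithin 0 (Set.Ioi 0)) (nhds (2 ^ (q-1) * a ^ q)) := by
      have h1 : ContinuousAt (fun ε : ℝ => 2 ^ (q-1) * (a+ε) ^ q) 0 := by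
        have h2 : ContinuousAt (fun ε : ℝ => a + ε) 0 :=
          (continuous_const.add continuous_id).continuousAt
        have h3 : ContinuousAt (fun z : ℝ => z ^ q) (a + 0) := by
          rw [add_zero]
          exact Real.continuousAt_rpow_const a q (Or.inl h0a.ne')
        exact (ContinuousAt.comp h3 h2).const_mul _
      have := h1.tendsto.mono_left (nhdsWithin_le_nhds (s := Set.Ioi (0:ℝ)))
      simpa using this
    have hcomp := hFc.tendsto.comp he_tendsto
    have hev : ∀ᶠ ε in nhdsWithin (0:ℝ) (Set.Ioi 0),
        bihariF ϱ q (2 ^ (q-1) * (a+ε) ^ q) < bihariF ϱ q (2 ^ (q-1) * a ^ q) + δ :=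
      hcomp.eventually_lt_const (by linarith)
    obtain ⟨ε, hε1, hε0⟩ := (hev.and self_mem_nhdsWithin).exists
    exact ⟨ε, hε0, hε1.le⟩

theorem bihari_type_quantitative (α a b T p q : ℝ) (hα : 1/2 < α) (hα1 : α < 1)
    (hp1 : 1 < p) (hp2 : p < 2) (hαp : α < 1/p) (hpq : 1/p + 1/q = 1)
    (ha : 0 ≤ a) (hb : 0 ≤ b) (hT : 0 < T)
    (ϱ : ℝ → ℝ) (hconc : ConcaveOn ℝ (Set.Ici 0) ϱ)
    (hmono : MonotoneOn ϱ (Set.Ici 0))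
    (h0 : ϱ 0 = 0) (hpos : ∀ u : ℝ, 0 < u → 0 < ϱ u)
    (f : ℝ → ℝ) (hf : ContinuousOn f (Set.Icc 0 T))
    (hfnn : ∀ t ∈ Set.Icc (0:ℝ) T, 0 ≤ f t)
    (hineq : ∀ t ∈ Set.Icc (0:ℝ) T,
      f t ≤ a + b * t ^ α * ∫ s in (0:ℝ)..t, (t - s) ^ (-α) * s ^ (-α) * ϱ (f s)) :
    ∀ t ∈ Set.Icc (0:ℝ) T, ∀ x : ℝ, 0 < x →
      (∫ u in (1:ℝ)..x, 1 / (ϱ (u ^ (1/q))) ^ q) =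
        (∫ u in (1:ℝ)..(2 ^ (q-1) * a ^ q), 1 / (ϱ (u ^ (1/q))) ^ q)
          + 2 ^ (q-1) * b ^ q
            * ((∫ u in (0:ℝ)..1, (1 - u) ^ (-(p*α)) * u ^ (-(p*α)))) ^ (q/p)
            * t ^ (q * (1/p - α) + 1)
      → f t ≤ x ^ (1/q) := by
  intro t₀ ht₀ x hx hFeq
  have hp0 : 0 < p := lt_trans one_pos hp1
  have h1p_lt : 1/p < 1 := by rw [div_lt_one hp0]; exact hp1
  have h1p_pos : 0 < 1/p := by positivity
  have hq_inv : 1/q = 1 - 1/p := by linarith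
  have hq0 : 0 < q := by
    by_contra hcon
    push_neg at hcon
    have : 1/q ≤ 0 := one_div_nonpos.mpr hcon
    linarith
  by_contra hcon
  push_neg at hcon
  have hxq : 0 < x ^ (1/q) := Real.rpow_pos_of_pos hx _
  have hft : 0 < f t₀ := lt_trans hxq hcon
  have hxy : x < (f t₀) ^ q := by
    have h1 : (x ^ (1/q)) ^ q < (f t₀) ^ q :=
      Real.rpow_lt_rpow (Real.rpow_nonneg hx.le _) hcon hq0
    rwa [one_div, Real.rpow_inv_rpow hx.le hq0.ne'] at h1
  have hy : 0 < (f t₀) ^ q := Real.rpow_pos_of_pos hft _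
  have hδ : 0 < ∫ u in x..((f t₀) ^ q), 1 / bihariW ϱ q u := by
    refine intervalIntegral.intervalIntegral_pos_of_pos_on
      (bihariWinv_intInt hq0 hconc hpos hx hy) (fun u hu => ?_) hxy
    have hu0 : 0 < u := lt_trans hx hu.1
    have := bihariW_pos (q := q) hpos hu0
    positivity
  obtain ⟨ε, hε0, hεle⟩ := bihari_eps hq0 hconc hpos ha (half_pos hδ)
  have haux := bihari_aux α a b T p q hα hα1 hp1 hp2 hαp hpq ha hb hT ϱ hconc hmono
    h0 hpos f hf hfnn hineq ε hε0 t₀ ht₀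
  have hFy : bihariF ϱ q ((f t₀) ^ q)
      = bihariF ϱ q x + ∫ u in x..((f t₀) ^ q), 1 / bihariW ϱ q u :=
    bihariF_add hq0 hconc hpos hx hy
  have hmono2 : bihariF ϱ q ((f t₀) ^ q) ≤ bihariF ϱ q ((f t₀ + ε) ^ q) :=
    bihariF_le hq0 hconc hpos hy (Real.rpow_le_rpow hft.le (by linarith) hq0.le)
  have hFeq' : bihariF ϱ q x = bihariF ϱ q (2 ^ (q-1) * a ^ q)
      + 2 ^ (q-1) * b ^ q
        * ((∫ u in (0:ℝ)..1, (1 - u) ^ (-(p*α)) * u ^ (-(p*α)))) ^ (q/p)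
        * t₀ ^ (q * (1/p - α) + 1) := hFeq
  linarith [haux, hεle, hmono2, hFy, hFeq', hδ]
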